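/- arXiv:2008.11487 — 9 statements merged into one kernel-verified Lean document; each statement's English description precedes it below -/
import Mathlib

section
/- For each u ∈ {1,…,d} let V_{R,u} = I_u·V_R denote the image of V_R under I_u. Then V_{R,u} ⊆ V_R for every u, the family of subspaces (V_{R,u})_{u=1}^{d} is independent (the sum of these subspaces is direct), and V_R equals the direct sum V_{R,1} ⊕ V_{R,2} ⊕ ⋯ ⊕ V_{R,d}. -/
open Matrix

noncomputable def diagInd (k d : ℕ) (φ : Fin k → Fin d) (u : Fin d) :
    Matrix (Fin k) (Fin k) ℝ :=
  Matrix.diagonal fun i => if φ i = u then (1 : ℝ) else 0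

noncomputable def chain (k d : ℕ) (Q : Matrix (Fin k) (Fin k) ℝ)
    (φ : Fin k → Fin d) : List (Fin d) → Matrix (Fin k) (Fin k) ℝ
  | [] => 1
  | u :: l => diagInd k d φ u * Q * chain k d Q φ l

noncomputable def reachSpace (k d : ℕ) (Q : Matrix (Fin k) (Fin k) ℝ)
    (φ : Fin k → Fin d) (ρ : Fin k → ℝ) : Submodule ℝ (Fin k → ℝ) :=
  Submodule.span ℝ { v | ∃ (l : List (Fin d)) (u0 : Fin d),
    v = (chain k d Q φ l * diagInd k d φ u0) *ᵥ ρ }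

noncomputable def nullSpace (k d : ℕ) (Q : Matrix (Fin k) (Fin k) ℝ)
    (φ : Fin k → Fin d) : Submodule ℝ (Fin k → ℝ) where
  carrier := { v | ∀ (l : List (Fin d)) (u0 : Fin d),
    (1 : Fin k → ℝ) ⬝ᵥ ((chain k d Q φ l * diagInd k d φ u0) *ᵥ v) = 0 }
  add_mem' := by
    intro a b ha hb l u0
    simp [Matrix.mulVec_add, dotProduct_add, ha l u0, hb l u0]
  zero_mem' := by intro l u0; simp
  smul_mem' := by
    intro c a ha l u0
    simp [Matrix.mulVec_smul, dotProduct_smul, ha l u0]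

lemma diagInd_mul_diagInd (k d : ℕ) (φ : Fin k → Fin d) (u u' : Fin d) :
    diagInd k d φ u * diagInd k d φ u' =
      if u = u' then diagInd k d φ u else 0 := by
  unfold diagInd
  ext i j
  rw [Matrix.diagonal_mul_diagonal]
  split_ifs with h
  · subst h; simp [Matrix.diagonal_apply]; split_ifs <;> simp
  · simp only [Matrix.diagonal_apply, Matrix.zero_apply]
    split_ifs with h1 h2 h3 <;> simp_all

lemma sum_diagInd (k d : ℕ) (φ : Fin k → Fin d) :
    ∑ u : Fin d, diagInd k d φ u = 1 := by
  ext i j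
  simp only [diagInd, Matrix.sum_apply, Matrix.diagonal_apply, Matrix.one_apply]
  by_cases h : i = j
  · subst h; simp
  · simp [h]

noncomputable def fiberSub (k d : ℕ) (φ : Fin k → Fin d) (u : Fin d) :
    Submodule ℝ (Fin k → ℝ) where
  carrier := {x | ∀ i, φ i ≠ u → x i = 0}
  add_mem' := by intro a b ha hb i hi; simp [ha i hi, hb i hi]
  zero_mem' := by intro i hi; rfl
  smul_mem' := by intro c a ha i hi; simp [ha i hi]

noncomputable def cofiberSub (k d : ℕ) (φ : Fin k → Fin d) (u : Fin d) :
    Submodule ℝ (Fin k → ℝ) where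
  carrier := {x | ∀ i, φ i = u → x i = 0}
  add_mem' := by intro a b ha hb i hi; simp [ha i hi, hb i hi]
  zero_mem' := by intro i hi; rfl
  smul_mem' := by intro c a ha i hi; simp [ha i hi]

lemma map_le_fiber (k d : ℕ) (φ : Fin k → Fin d) (u : Fin d)
    (X : Submodule ℝ (Fin k → ℝ)) :
    Submodule.map (diagInd k d φ u).mulVecLin X ≤ fiberSub k d φ u := by
  rintro _ ⟨x, -, rfl⟩ i hi
  simp [Matrix.mulVecLin_apply, diagInd, Matrix.mulVec_diagonal, hi]


/-- With `V_{R,u} = I_u · V_R`, each `V_{R,u}` is contained in `V_R`, the family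
`(V_{R,u})ᵤ` is independent (their sum is direct), and `V_R = ⨁ᵤ V_{R,u}`. -/
theorem reachSpace_directSum
    (k d : ℕ) (hk : 0 < k) (hd : 0 < d) (φ : Fin k → Fin d)
    (Q : Matrix (Fin k) (Fin k) ℝ)
    (hQ : (1 : Fin k → ℝ) ᵥ* Q = 1)
    (ρ : Fin k → ℝ) (hρ : Q *ᵥ ρ = ρ) :
    (∀ u : Fin d,
      Submodule.map (diagInd k d φ u).mulVecLin (reachSpace k d Q φ ρ) ≤ reachSpace k d Q φ ρ) ∧
    iSupIndep (fun u : Fin d =>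
      Submodule.map (diagInd k d φ u).mulVecLin (reachSpace k d Q φ ρ)) ∧
    reachSpace k d Q φ ρ =
      ⨆ u : Fin d, Submodule.map (diagInd k d φ u).mulVecLin (reachSpace k d Q φ ρ) := by
  have h1 : ∀ u : Fin d,
      Submodule.map (diagInd k d φ u).mulVecLin (reachSpace k d Q φ ρ)
        ≤ reachSpace k d Q φ ρ := by
    intro u
    unfold reachSpace
    rw [Submodule.map_span]
    apply Submodule.span_le.mpr
    rintro _ ⟨v, ⟨l, u0, rfl⟩, rfl⟩
    simp only [Matrix.mulVecLin_apply, Matrix.mulVec_mulVec]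
    cases l with
    | nil =>
        show (diagInd k d φ u * (chain k d Q φ [] * diagInd k d φ u0)) *ᵥ ρ ∈ _
        rw [show chain k d Q φ [] = 1 from rfl, one_mul, diagInd_mul_diagInd]
        split_ifs with h
        · subst h
          exact Submodule.subset_span ⟨[], u, by rw [show chain k d Q φ [] = 1 from rfl, one_mul]⟩
        · simp only [Matrix.zero_mulVec]
          exact Submodule.zero_mem _
    | cons u' l' =>
        show (diagInd k d φ u * (chain k d Q φ (u' :: l') * diagInd k d φ u0)) *ᵥ ρ ∈ _
        rw [← mul_assoc]
        have : diagInd k d φ u * chain k d Q φ (u' :: l')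
            = if u = u' then chain k d Q φ (u' :: l') else 0 := by
          show diagInd k d φ u * (diagInd k d φ u' * Q * chain k d Q φ l') = _
          rw [← mul_assoc, ← mul_assoc, diagInd_mul_diagInd]
          split_ifs with h
          · subst h; rfl
          · simp
        rw [this]
        split_ifs with h
        · exact Submodule.subset_span ⟨u' :: l', u0, rfl⟩
        · simp only [zero_mul, Matrix.zero_mulVec]
          exact Submodule.zero_mem _
  refine ⟨h1, ?_, ?_⟩
  · intro u
    have hcof : (⨆ v, ⨆ (_ : v ≠ u),
        Submodule.map (diagInd k d φ v).mulVecLin (reachSpace k d Q φ ρ))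
          ≤ cofiberSub k d φ u := by
      apply iSup_le; intro v; apply iSup_le; intro hv
      rintro _ ⟨x, -, rfl⟩ i hi
      have hne : φ i ≠ v := by rw [hi]; exact fun h => hv h.symm
      simp [Matrix.mulVecLin_apply, diagInd, Matrix.mulVec_diagonal, hne]
    have hdisj : Disjoint (fiberSub k d φ u) (cofiberSub k d φ u) := by
      rw [disjoint_iff, Submodule.eq_bot_iff]
      rintro x ⟨hx1, hx2⟩
      funext i
      by_cases h : φ i = u
      · exact hx2 i h
      · exact hx1 i h
    exact hdisj.mono (map_le_fiber k d φ u _) hcof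
  · apply le_antisymm
    · apply Submodule.span_le.mpr
      rintro v ⟨l, u0, rfl⟩
      set w := (chain k d Q φ l * diagInd k d φ u0) *ᵥ ρ with hw
      have hmem : w ∈ reachSpace k d Q φ ρ := Submodule.subset_span ⟨l, u0, hw⟩
      have hsum : ∀ (s : Finset (Fin d)),
          (∑ u ∈ s, diagInd k d φ u) *ᵥ w = ∑ u ∈ s, diagInd k d φ u *ᵥ w := by
        intro s
        induction s using Finset.induction_on with
        | empty => simp [Matrix.zero_mulVec]
        | insert _ _ hnotmem ih =>
            rw [Finset.sum_insert hnotmem, Finset.sum_insert hnotmem,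
              Matrix.add_mulVec, ih]
      have : w = ∑ u : Fin d, diagInd k d φ u *ᵥ w := by
        rw [← hsum, sum_diagInd, Matrix.one_mulVec]
      rw [this]
      apply Submodule.sum_mem
      intro u _
      apply Submodule.mem_iSup_of_mem u
      exact ⟨w, hmem, rfl⟩
    · exact iSup_le h1
end

section
/- Assume that for every u ∈ {1,…,d} the subspace I_u·V_R is not contained in ker e^T. Let k̂ = dim V_R. Then there exist a matrix T ∈ ℝ^{k×k̂} of rank k̂ (full column rank) and a map φ̂ : {1,…,k̂} → {1,…,d} such that: (i) T_{ij} = 0 whenever φ(i) ≠ φ̂(j); (ii) the column space of T equals V_R; and (iii) e^T T = ê^T, where ê ∈ ℝ^{k̂} is the all-ones vector (i.e., every column of T sums to 1). -/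
open Matrix

/-- Every generator of the reachable space is supported on a single block of `φ`. -/
lemma gen_blockwise (k d : ℕ) (Q : Matrix (Fin k) (Fin k) ℝ) (φ : Fin k → Fin d)
    (ρ : Fin k → ℝ) (l : List (Fin d)) (u0 : Fin d) :
    ∃ u : Fin d, ∀ i, φ i ≠ u →
      ((chain k d Q φ l * diagInd k d φ u0) *ᵥ ρ) i = 0 := by
  cases l with
  | nil =>
    refine ⟨u0, fun i hi => ?_⟩
    simp [chain, diagInd, Matrix.mulVec_diagonal, hi]
  | cons u l' =>
    refine ⟨u, fun i hi => ?_⟩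
    have h : chain k d Q φ (u :: l') * diagInd k d φ u0
        = diagInd k d φ u * (Q * chain k d Q φ l' * diagInd k d φ u0) := by
      simp only [chain, Matrix.mul_assoc]
    rw [h, ← Matrix.mulVec_mulVec]
    simp [diagInd, Matrix.mulVec_diagonal, hi]

/-- If no `I_u · V_R` is contained in `ker eᵀ`, then with `k̂ = dim V_R` there is a
full-column-rank `T ∈ ℝ^{k×k̂}` and `φ̂ : Fin k̂ → Fin d` such that `T i j = 0` whenever
`φ i ≠ φ̂ j`, the column space of `T` is `V_R`, and every column of `T` sums to `1`. -/
theorem exists_basis_matrix_reachSpace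
    (k d : ℕ) (hk : 0 < k) (hd : 0 < d) (φ : Fin k → Fin d)
    (Q : Matrix (Fin k) (Fin k) ℝ)
    (hQ : (1 : Fin k → ℝ) ᵥ* Q = 1)
    (ρ : Fin k → ℝ) (hρ : Q *ᵥ ρ = ρ)
    (hassum : ∀ u : Fin d,
      ∃ v ∈ Submodule.map (diagInd k d φ u).mulVecLin (reachSpace k d Q φ ρ),
        (1 : Fin k → ℝ) ⬝ᵥ v ≠ 0)
    (khat : ℕ) (hkhat : khat = Module.finrank ℝ (reachSpace k d Q φ ρ)) :
    ∃ (T : Matrix (Fin k) (Fin khat) ℝ) (φhat : Fin khat → Fin d),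
      T.rank = khat ∧
      (∀ (i : Fin k) (j : Fin khat), φ i ≠ φhat j → T i j = 0) ∧
      LinearMap.range T.mulVecLin = reachSpace k d Q φ ρ ∧
      (1 : Fin k → ℝ) ᵥ* T = 1 := by
  classical
  set V : Submodule ℝ (Fin k → ℝ) := reachSpace k d Q φ ρ with hVdef
  -- the linear functional `eᵀ`
  set f : (Fin k → ℝ) →ₗ[ℝ] ℝ :=
    { toFun := fun v => (1 : Fin k → ℝ) ⬝ᵥ v
      map_add' := fun x y => by simp [dotProduct_add]
      map_smul' := fun c x => by simp [dotProduct_smul] } with hfdef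
  -- generators lie in V
  have hVgen : ∀ (l : List (Fin d)) (u0 : Fin d),
      (chain k d Q φ l * diagInd k d φ u0) *ᵥ ρ ∈ V :=
    fun l u0 => Submodule.subset_span ⟨l, u0, rfl⟩
  -- the set of blockwise vectors of V spans V
  set S : Set (Fin k → ℝ) :=
    {v | v ∈ V ∧ ∃ u : Fin d, ∀ i, φ i ≠ u → v i = 0} with hSdef
  have hspanS : Submodule.span ℝ S = V := by
    apply le_antisymm
    · exact Submodule.span_le.2 fun v hv => hv.1
    · refine Submodule.span_le.2 ?_
      rintro v ⟨l, u0, rfl⟩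
      exact Submodule.subset_span ⟨hVgen l u0, gen_blockwise k d Q φ ρ l u0⟩
  obtain ⟨t, htS, htspan, htind⟩ := exists_linearIndependent ℝ S
  have htV : Submodule.span ℝ t = V := by rw [htspan, hspanS]
  have htfin : t.Finite := htind.setFinite
  haveI : Fintype t := htfin.fintype
  have hcard : Fintype.card t = khat := by
    have h1 := finrank_span_set_eq_card htind
    rw [htV, ← hkhat] at h1
    rw [← Set.toFinset_card, h1]
  -- enumerate t by Fin khat
  let g : Fin khat ≃ t := (Fintype.equivFinOfCardEq hcard).symm
  set b : Fin khat → (Fin k → ℝ) := fun j => ((g j : t) : Fin k → ℝ) with hbdef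
  have hbV : ∀ j, b j ∈ V := fun j => (htS (g j).2).1
  have hbblock : ∀ j, ∃ u : Fin d, ∀ i, φ i ≠ u → b j i = 0 :=
    fun j => (htS (g j).2).2
  choose φhat hφhat using hbblock
  have hrange : Set.range b = t := by
    ext x
    constructor
    · rintro ⟨j, rfl⟩; exact (g j).2
    · intro hx; exact ⟨g.symm ⟨x, hx⟩, by simp [hbdef]⟩
  have hspanb : Submodule.span ℝ (Set.range b) = V := by rw [hrange, htV]
  -- action of the block projections on the b j
  have hIb : ∀ (u : Fin d) (j : Fin khat),
      (diagInd k d φ u).mulVecLin (b j) = if φhat j = u then b j else 0 := by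
    intro u j
    by_cases h : φhat j = u
    · rw [if_pos h]
      funext i
      rw [Matrix.mulVecLin_apply, diagInd, Matrix.mulVec_diagonal]
      by_cases hi : φ i = u
      · rw [if_pos hi, one_mul]
      · rw [if_neg hi, zero_mul, hφhat j i fun he => hi (he.trans h)]
    · rw [if_neg h]
      funext i
      rw [Matrix.mulVecLin_apply, diagInd, Matrix.mulVec_diagonal]
      by_cases hi : φ i = u
      · rw [if_pos hi, one_mul]
        exact hφhat j i fun he => h (he.symm.trans hi)
      · rw [if_neg hi, zero_mul]; rfl
  -- for each block u, some b j in block u with nonzero column sum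
  have hj0 : ∀ u : Fin d, ∃ j : Fin khat, φhat j = u ∧ f (b j) ≠ 0 := by
    intro u
    obtain ⟨v, hv, hfv⟩ := hassum u
    obtain ⟨w, hwV, rfl⟩ := Submodule.mem_map.1 hv
    rw [← hspanb] at hwV
    obtain ⟨c, rfl⟩ := (Submodule.mem_span_range_iff_exists_fun ℝ).1 hwV
    have hfv' : f ((diagInd k d φ u).mulVecLin (∑ j, c j • b j)) ≠ 0 := hfv
    have hsum : (diagInd k d φ u).mulVecLin (∑ j, c j • b j)
        = ∑ j, c j • (if φhat j = u then b j else 0) := by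
      rw [map_sum]
      exact Finset.sum_congr rfl fun j _ => by rw [_root_.map_smul, hIb u j]
    rw [hsum, map_sum] at hfv'
    obtain ⟨j, -, hj⟩ := Finset.exists_ne_zero_of_sum_ne_zero hfv'
    have hju : φhat j = u := by
      by_contra h
      rw [if_neg h, smul_zero, map_zero] at hj
      exact hj rfl
    refine ⟨j, hju, fun h0 => ?_⟩
    rw [if_pos hju, _root_.map_smul, smul_eq_mul, h0, mul_zero] at hj
    exact hj rfl
  choose j0 hj0u hj0f using hj0
  -- normalized block vectors
  set v0 : Fin d → (Fin k → ℝ) := fun u => (f (b (j0 u)))⁻¹ • b (j0 u) with hv0def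
  have hfv0 : ∀ u, f (v0 u) = 1 := by
    intro u
    simp only [hv0def]
    rw [_root_.map_smul, smul_eq_mul, inv_mul_cancel₀ (hj0f u)]
  have hv0V : ∀ u, v0 u ∈ V := fun u => Submodule.smul_mem _ _ (hbV _)
  have hv0block : ∀ u i, φ i ≠ u → v0 u i = 0 := by
    intro u i hi
    have : φ i ≠ φhat (j0 u) := fun he => hi (he.trans (hj0u u))
    rw [hv0def]
    simp [hφhat (j0 u) i this]
  -- the columns
  set tt : Fin khat → (Fin k → ℝ) :=
    fun j => b j + (1 - f (b j)) • v0 (φhat j) with httdef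
  have hftt : ∀ j, f (tt j) = 1 := by
    intro j
    simp only [httdef, _root_.map_add, _root_.map_smul, smul_eq_mul, hfv0 (φhat j)]
    ring
  have httblock : ∀ j i, φ i ≠ φhat j → tt j i = 0 := by
    intro j i hi
    rw [httdef]
    simp [hφhat j i hi, hv0block (φhat j) i hi]
  have httV : ∀ j, tt j ∈ V := by
    intro j
    rw [httdef]
    exact Submodule.add_mem _ (hbV j) (Submodule.smul_mem _ _ (hv0V _))
  -- v0 u is itself one of the columns
  have hv0tt : ∀ u, tt (j0 u) = v0 u := by
    intro u
    have hfb := hj0f u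
    simp only [httdef, hj0u u, hv0def, smul_smul]
    nth_rewrite 1 [← one_smul ℝ (b (j0 u))]
    rw [← add_smul]
    congr 1
    field_simp
    ring
  -- the matrix
  set T : Matrix (Fin k) (Fin khat) ℝ := Matrix.of fun i j => tt j i with hTdef
  have hTcol : Tᵀ = tt := rfl
  have hrangeT : LinearMap.range T.mulVecLin = V := by
    rw [Matrix.range_mulVecLin, show T.col = tt from rfl]
    apply le_antisymm
    · exact Submodule.span_le.2 (by rintro x ⟨j, rfl⟩; exact httV j)
    · rw [← hspanb]
      refine Submodule.span_le.2 ?_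
      rintro x ⟨j, rfl⟩
      have hbj : b j = tt j - (1 - f (b j)) • v0 (φhat j) := by
        rw [eq_sub_iff_add_eq]
      rw [hbj, ← hv0tt (φhat j)]
      exact Submodule.sub_mem _
        (Submodule.subset_span ⟨j, rfl⟩)
        (Submodule.smul_mem _ _ (Submodule.subset_span ⟨j0 (φhat j), rfl⟩))
  refine ⟨T, φhat, ?_, ?_, ?_, ?_⟩
  · rw [Matrix.rank, hrangeT, hkhat]
  · intro i j hij
    exact httblock j i hij
  · exact hrangeT
  · funext j
    have h1 : ((1 : Fin k → ℝ) ᵥ* T) j = (1 : Fin k → ℝ) ⬝ᵥ tt j := rfl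
    rw [h1]
    exact hftt j
end

section
/- Let k̂ = k − dim V_N. Then there exist a matrix T ∈ ℝ^{k̂×k} of rank k̂ (full row rank) and a map φ̂ : {1,…,k̂} → {1,…,d} such that: (i) T_{ij} = 0 whenever φ̂(i) ≠ φ(j); (ii) ker T = V_N; and (iii) e^T = ê^T T, where ê ∈ ℝ^{k̂} is the all-ones vector (i.e., the rows of T sum to e^T). -/
open Matrix

/- ### Auxiliary lemmas -/

/-- In a nonzero finite-dimensional space (or when the functional is forced to be nonzero),
there is a basis on each element of which a given functional evaluates to `1`. -/
lemma exists_basis_eval_one {V : Type*} [AddCommGroup V] [Module ℝ V] [FiniteDimensional ℝ V]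
    (ε : V →ₗ[ℝ] ℝ) (h : ε = 0 → Module.finrank ℝ V = 0) :
    ∃ b : Module.Basis (Fin (Module.finrank ℝ V)) ℝ V, ∀ i, ε (b i) = 1 := by
  by_cases hε : ε = 0
  · refine ⟨Module.finBasis ℝ V, fun i => ?_⟩
    have h0 := h hε
    exact absurd i.isLt (by omega)
  · set n := Module.finrank ℝ V
    set a := Module.finBasis ℝ V
    have hex : ∃ i0, ε (a i0) ≠ 0 := by
      by_contra hc
      push_neg at hc
      exact hε (a.ext fun i => by simp [hc i])
    obtain ⟨i0, hi0⟩ := hex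
    set c : ℝ := ε (a i0) with hc
    set v : Fin n → V := fun j =>
      if j = i0 then c⁻¹ • a i0 else a j - ((ε (a j) - 1) * c⁻¹) • a i0 with hv
    have hεv : ∀ j, ε (v j) = 1 := by
      intro j
      by_cases hj : j = i0 <;> simp [hv, hj, _root_.map_smul, map_sub]
      · field_simp
        rw [← hc]
      · field_simp
        rw [← hc]
        ring
    have hspan : ⊤ ≤ Submodule.span ℝ (Set.range v) := by
      rw [← a.span_eq]
      apply Submodule.span_le.mpr
      rintro x ⟨j, rfl⟩
      have hi0mem : a i0 ∈ Submodule.span ℝ (Set.range v) := by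
        have : a i0 = c • v i0 := by
          simp [hv, smul_smul, mul_inv_cancel₀ hi0]
        rw [this]
        exact Submodule.smul_mem _ _ (Submodule.subset_span ⟨i0, rfl⟩)
      by_cases hj : j = i0
      · rw [hj]; exact hi0mem
      · have : a j = v j + ((ε (a j) - 1) * c⁻¹) • a i0 := by simp [hv, hj]
        rw [this]
        exact Submodule.add_mem _ (Submodule.subset_span ⟨j, rfl⟩)
          (Submodule.smul_mem _ _ hi0mem)
    have hcard : Fintype.card (Fin n) = n := Fintype.card_fin n
    refine ⟨basisOfTopLeSpanOfCardEqFinrank v hspan hcard, fun i => ?_⟩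
    rw [coe_basisOfTopLeSpanOfCardEqFinrank]
    exact hεv i

section
variable {k d : ℕ} {φ : Fin k → Fin d}

lemma diagInd_mulVec (u : Fin d) (v : Fin k → ℝ) :
    diagInd k d φ u *ᵥ v = fun i => if φ i = u then v i else 0 := by
  funext i
  simp [diagInd, Matrix.mulVec_diagonal, ite_mul]

lemma diagInd_diagInd_mulVec (u u' : Fin d) (v : Fin k → ℝ) :
    diagInd k d φ u *ᵥ (diagInd k d φ u' *ᵥ v) =
      if u = u' then diagInd k d φ u' *ᵥ v else 0 := by
  by_cases h : u = u'
  · subst h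
    simp only [if_true, diagInd_mulVec]
    funext i
    by_cases hi : φ i = u <;> simp [hi]
  · simp only [h, if_false, diagInd_mulVec]
    funext i
    by_cases hi : φ i = u <;> by_cases hi' : φ i = u' <;> simp_all

lemma sum_diagInd_mulVec (v : Fin k → ℝ) :
    ∑ u : Fin d, diagInd k d φ u *ᵥ v = v := by
  funext i
  simp only [Finset.sum_apply, diagInd_mulVec]
  simp

variable {Q : Matrix (Fin k) (Fin k) ℝ}

lemma diagInd_mulVec_mem_nullSpace {v : Fin k → ℝ} (hv : v ∈ nullSpace k d Q φ) (u : Fin d) :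
    diagInd k d φ u *ᵥ v ∈ nullSpace k d Q φ := by
  intro l u0
  rw [← Matrix.mulVec_mulVec, diagInd_diagInd_mulVec]
  by_cases h : u0 = u
  · subst h
    have := hv l u0
    rw [← Matrix.mulVec_mulVec] at this
    simpa using this
  · simp [h]

lemma sum_eq_zero_of_mem_nullSpace {v : Fin k → ℝ} (hv : v ∈ nullSpace k d Q φ) :
    ∑ i, v i = 0 := by
  have h1 : ∀ u : Fin d, (1 : Fin k → ℝ) ⬝ᵥ (diagInd k d φ u *ᵥ v) = 0 := by
    intro u
    have := hv [] u
    simpa [chain] using this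
  calc ∑ i, v i = ∑ i, (∑ u : Fin d, diagInd k d φ u *ᵥ v) i := by
        rw [sum_diagInd_mulVec]
    _ = ∑ u : Fin d, ∑ i, (diagInd k d φ u *ᵥ v) i := by
        simp only [Finset.sum_apply]
        rw [Finset.sum_comm]
    _ = 0 := Finset.sum_eq_zero fun u _ => by simpa [dotProduct] using h1 u

end

/-- With `k̂ = k − dim V_N` there exist a full-row-rank `T ∈ ℝ^{k̂×k}` and
`φ̂ : Fin k̂ → Fin d` such that `T i j = 0` whenever `φ̂ i ≠ φ j`, `ker T = V_N`, and the rows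
of `T` sum to `eᵀ`. -/
theorem exists_basis_matrix_nullSpace
    (k d : ℕ) (hk : 0 < k) (hd : 0 < d) (φ : Fin k → Fin d)
    (Q : Matrix (Fin k) (Fin k) ℝ)
    (hQ : (1 : Fin k → ℝ) ᵥ* Q = 1)
    (ρ : Fin k → ℝ) (hρ : Q *ᵥ ρ = ρ)
    (khat : ℕ) (hkhat : khat = k - Module.finrank ℝ (nullSpace k d Q φ)) :
    ∃ (T : Matrix (Fin khat) (Fin k) ℝ) (φhat : Fin khat → Fin d),
      T.rank = khat ∧
      (∀ (i : Fin khat) (j : Fin k), φhat i ≠ φ j → T i j = 0) ∧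
      LinearMap.ker T.mulVecLin = nullSpace k d Q φ ∧
      (1 : Fin khat → ℝ) ᵥ* T = (1 : Fin k → ℝ) := by
  classical
  set N := nullSpace k d Q φ with hN
  -- the "sum of coordinates" functional
  set f : (Fin k → ℝ) →ₗ[ℝ] ℝ := ∑ i : Fin k, LinearMap.proj i with hf
  have hfapp : ∀ v : Fin k → ℝ, f v = ∑ i, v i := by
    intro v; simp [hf]
  have hNf : N ≤ LinearMap.ker f := by
    intro v hv
    rw [LinearMap.mem_ker, hfapp]
    exact sum_eq_zero_of_mem_nullSpace hv
  -- it descends to the quotient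
  set ε : ((Fin k → ℝ) ⧸ N) →ₗ[ℝ] ℝ := N.liftQ f hNf with hεdef
  set G : Fin d → ((Fin k → ℝ) →ₗ[ℝ] ((Fin k → ℝ) ⧸ N)) :=
    fun u => N.mkQ ∘ₗ (diagInd k d φ u).mulVecLin with hGdef
  have hGapp : ∀ u v, G u v = Submodule.Quotient.mk (diagInd k d φ u *ᵥ v) := fun u v => rfl
  have hεG : ∀ u v, ε (G u v) = ∑ i, (diagInd k d φ u *ᵥ v) i := by
    intro u v
    rw [hGapp, hεdef, Submodule.liftQ_apply, hfapp]
  set M : Fin d → Submodule ℝ ((Fin k → ℝ) ⧸ N) := fun u => LinearMap.range (G u) with hMdef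
  set εu : ∀ u : Fin d, (M u →ₗ[ℝ] ℝ) := fun u => ε.domRestrict (M u) with hεu
  have hεu0 : ∀ u, εu u = 0 → Module.finrank ℝ (M u) = 0 := by
    intro u h0
    have hnone : ∀ j : Fin k, φ j ≠ u := by
      intro j hj
      have h1 : ε (G u (Pi.single j 1)) = 0 := by
        have := congrArg (fun g => g ⟨G u (Pi.single j 1), LinearMap.mem_range_self _ _⟩) h0
        simpa [hεu] using this
      rw [hεG, diagInd_mulVec] at h1
      have : (∑ i, if φ i = u then Pi.single j (1:ℝ) i else 0) = 1 := by
        rw [Finset.sum_eq_single j]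
        · simp [hj]
        · intro i _ hij
          by_cases hiu : φ i = u <;> simp [hiu, Pi.single_eq_of_ne hij]
        · simp
      rw [this] at h1
      norm_num at h1
    have hG0 : G u = 0 := by
      apply LinearMap.ext
      intro v
      rw [hGapp, diagInd_mulVec]
      have : (fun i => if φ i = u then v i else 0) = (0 : Fin k → ℝ) := by
        funext i; simp [hnone i]
      rw [this]
      simp
    have : M u = ⊥ := by rw [hMdef]; simp [hG0]
    rw [this]
    exact finrank_bot ℝ _
  -- choose good bases for the ranges
  have hbas : ∀ u, ∃ b : Module.Basis (Fin (Module.finrank ℝ (M u))) ℝ (M u), ∀ i, εu u (b i) = 1 :=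
    fun u => exists_basis_eval_one (εu u) (hεu0 u)
  choose b hb using hbas
  -- the combined coordinate map
  set 𝒯κ : (Fin k → ℝ) →ₗ[ℝ] ((Σ u : Fin d, Fin (Module.finrank ℝ (M u))) → ℝ) :=
    LinearMap.pi (fun p => ((b p.1).coord p.2) ∘ₗ (G p.1).rangeRestrict) with h𝒯κ
  have h𝒯κapp : ∀ v p, 𝒯κ v p = (b p.1).coord p.2 ((G p.1).rangeRestrict v) := fun v p => rfl
  -- its kernel is N
  have hker : LinearMap.ker 𝒯κ = N := by
    ext v
    rw [LinearMap.mem_ker]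
    constructor
    · intro hv
      have hGv : ∀ u, (G u) v = 0 := by
        intro u
        have : (G u).rangeRestrict v = 0 := by
          rw [← (b u).forall_coord_eq_zero_iff]
          intro i
          have := congrFun hv ⟨u, i⟩
          simpa [h𝒯κapp] using this
        have := congrArg (Subtype.val) this
        simpa using this
      have hmem : ∀ u, diagInd k d φ u *ᵥ v ∈ N := by
        intro u
        have := hGv u
        rw [hGapp] at this
        exact (Submodule.Quotient.mk_eq_zero N).mp this
      rw [← sum_diagInd_mulVec (φ := φ) (d := d) v]
      exact Submodule.sum_mem _ fun u _ => hmem u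
    · intro hv
      funext p
      rw [h𝒯κapp]
      have : (G p.1).rangeRestrict v = 0 := by
        apply Subtype.ext
        simp only [LinearMap.rangeRestrict, LinearMap.codRestrict_apply, ZeroMemClass.coe_zero]
        rw [hGapp]
        exact (Submodule.Quotient.mk_eq_zero N).mpr (diagInd_mulVec_mem_nullSpace hv p.1)
      rw [this]
      simp
  -- it is surjective
  have hsurj : Function.Surjective 𝒯κ := by
    intro y
    set xq : ∀ u, M u := fun u =>
      (b u).repr.symm (Finsupp.equivFunOnFinite.symm fun i => y ⟨u, i⟩) with hxq
    have hex : ∀ u, ∃ w, G u w = (xq u : (Fin k → ℝ) ⧸ N) := fun u => (xq u).2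
    choose w hw using hex
    refine ⟨∑ u, diagInd k d φ u *ᵥ w u, ?_⟩
    funext p
    obtain ⟨u, i⟩ := p
    have hGveq : G u (∑ u', diagInd k d φ u' *ᵥ w u') = (xq u : (Fin k → ℝ) ⧸ N) := by
      rw [map_sum]
      have hterm : ∀ u' : Fin d, G u (diagInd k d φ u' *ᵥ w u') =
          if u = u' then G u' (w u') else 0 := by
        intro u'
        rw [hGapp, diagInd_diagInd_mulVec]
        by_cases h : u = u'
        · simp [h, hGapp]
        · simp [h]
      rw [Finset.sum_congr rfl fun u' _ => hterm u']
      rw [Finset.sum_ite_eq]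
      simp [hw u]
    have hrr : (G u).rangeRestrict (∑ u', diagInd k d φ u' *ᵥ w u') = xq u :=
      Subtype.ext (by simpa using hGveq)
    rw [h𝒯κapp]
    simp only [hrr, Module.Basis.coord_apply, hxq]
    simp
  -- cardinality bookkeeping
  have hcard : Fintype.card (Σ u : Fin d, Fin (Module.finrank ℝ (M u))) = khat := by
    have h1 := LinearMap.finrank_range_add_finrank_ker 𝒯κ
    rw [hker, LinearMap.range_eq_top.mpr hsurj, finrank_top] at h1
    rw [Module.finrank_fintype_fun_eq_card, Module.finrank_fintype_fun_eq_card,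
      Fintype.card_fin] at h1
    have hle : Module.finrank ℝ N ≤ k := by omega
    omega
  set σ : Fin khat ≃ (Σ u : Fin d, Fin (Module.finrank ℝ (M u))) :=
    Fintype.equivOfCardEq (by rw [Fintype.card_fin, hcard]) with hσ
  set 𝒯 : (Fin k → ℝ) →ₗ[ℝ] (Fin khat → ℝ) :=
    (LinearEquiv.funCongrLeft ℝ ℝ σ).toLinearMap ∘ₗ 𝒯κ with h𝒯
  have h𝒯app : ∀ v i, 𝒯 v i = 𝒯κ v (σ i) := fun v i => rfl
  set T : Matrix (Fin khat) (Fin k) ℝ := LinearMap.toMatrix' 𝒯 with hT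
  have hTmul : T.mulVecLin = 𝒯 := by
    apply LinearMap.ext
    intro v
    rw [Matrix.mulVecLin_apply, hT, ← Matrix.toLin'_apply, Matrix.toLin'_toMatrix']
  have h𝒯surj : Function.Surjective 𝒯 := by
    rw [h𝒯]
    exact (LinearEquiv.funCongrLeft ℝ ℝ σ).surjective.comp hsurj
  refine ⟨T, fun i => (σ i).1, ?_, ?_, ?_, ?_⟩
  · -- rank
    rw [Matrix.rank, hTmul, LinearMap.range_eq_top.mpr h𝒯surj, finrank_top,
      Module.finrank_fintype_fun_eq_card, Fintype.card_fin]
  · -- block structure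
    intro i j hne
    have hne' : (σ i).1 ≠ φ j := hne
    rw [hT, LinearMap.toMatrix'_apply, h𝒯app, h𝒯κapp]
    have hGz : (G (σ i).1) (fun j' => if j' = j then (1:ℝ) else 0) = 0 := by
      rw [hGapp, diagInd_mulVec]
      have : (fun i' => if φ i' = (σ i).1 then (if i' = j then (1:ℝ) else 0) else 0)
          = (0 : Fin k → ℝ) := by
        funext i'
        by_cases hij : i' = j
        · subst hij
          simp [Ne.symm hne']
        · simp [hij]
      rw [this]
      simp
    have : (G (σ i).1).rangeRestrict (fun j' => if j' = j then (1:ℝ) else 0) = 0 :=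
      Subtype.ext (by simpa using hGz)
    rw [show (Pi.single j (1:ℝ) : Fin k → ℝ) = fun j' => if j' = j then (1:ℝ) else 0 from funext fun j' => by simp [Pi.single_apply], this]
    simp
  · -- kernel
    rw [hTmul, h𝒯, LinearMap.ker_comp, LinearEquiv.ker, Submodule.comap_bot]
    exact hker
  · -- row sums
    funext j
    have hsumcoord : ∀ u (x : M u), ∑ i, (b u).coord i x = εu u x := by
      intro u x
      conv_rhs => rw [← (b u).sum_repr x]
      rw [map_sum]
      simp only [_root_.map_smul, hb u, smul_eq_mul, mul_one, Module.Basis.coord_apply]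
    have hTij : ∀ (i : Fin khat), T i j = 𝒯κ (fun j' => if j' = j then (1:ℝ) else 0) (σ i) := by
      intro i
      rw [hT, LinearMap.toMatrix'_apply, h𝒯app, show (Pi.single j (1:ℝ) : Fin k → ℝ) = fun j' => if j' = j then (1:ℝ) else 0 from funext fun j' => by simp [Pi.single_apply]]
    have : ((1 : Fin khat → ℝ) ᵥ* T) j = ∑ i, T i j := by
      simp [Matrix.vecMul, dotProduct]
    rw [this]
    rw [Finset.sum_congr rfl fun i _ => hTij i]
    rw [Fintype.sum_equiv σ _ (fun p => 𝒯κ (fun j' => if j' = j then (1:ℝ) else 0) p)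
      (fun i => rfl)]
    rw [← Finset.univ_sigma_univ, Finset.sum_sigma]
    have hblock : ∀ u, ∑ i, 𝒯κ (fun j' => if j' = j then (1:ℝ) else 0) ⟨u, i⟩
        = ε (G u (fun j' => if j' = j then (1:ℝ) else 0)) := by
      intro u
      simp only [h𝒯κapp]
      erw [hsumcoord u]
      rw [hεu]
      simp [LinearMap.domRestrict_apply]
    rw [Finset.sum_congr rfl fun u _ => hblock u]
    have : ∑ u, ε (G u fun j' => if j' = j then (1:ℝ) else 0) = 1 := by
      rw [Finset.sum_congr rfl fun u _ => hεG u _]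
      rw [← Finset.sum_comm]
      have : ∀ i : Fin k, ∑ u : Fin d, (diagInd k d φ u *ᵥ fun j' => if j' = j then (1:ℝ) else 0) i
          = if i = j then (1:ℝ) else 0 := by
        intro i
        have := congrFun (sum_diagInd_mulVec (φ := φ) (d := d)
          (fun j' => if j' = j then (1:ℝ) else 0)) i
        simpa [Finset.sum_apply] using this
      rw [Finset.sum_congr rfl fun i _ => this i]
      simp
    rw [this]
    simp
end

section
/- Let T ∈ ℝ^{k×m} have full column rank m, suppose the column space of T is Q-invariant (Q·(col span T) ⊆ col span T), ρ lies in the column space of T, and e^T T = ê^T, where ê ∈ ℝ^m is the all-ones vector. Then there exist a unique matrix Q̂ ∈ ℝ^{m×m} with Q T = T Q̂ and a unique vector ρ̂ ∈ ℝ^m with ρ = T ρ̂, and these satisfy ê^T Q̂ = ê^T and Q̂ ρ̂ = ρ̂; that is, Q̂ has an eigenvalue at one with left eigenvector ê and right eigenvector ρ̂. -/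
open Matrix

lemma inj_of_rank {k m : ℕ} (T : Matrix (Fin k) (Fin m) ℝ) (hrank : T.rank = m) :
    Function.Injective T.mulVecLin := by
  rw [← LinearMap.ker_eq_bot]
  have h := T.mulVecLin.finrank_range_add_finrank_ker
  rw [Matrix.rank] at hrank
  simp only [Module.finrank_fintype_fun_eq_card, Fintype.card_fin] at h
  rw [hrank] at h
  have : Module.finrank ℝ (LinearMap.ker T.mulVecLin) = 0 := by omega
  exact Submodule.finrank_eq_zero.mp this

/-- If `T ∈ ℝ^{k×m}` has full column rank, its column space is `Q`-invariant and
contains `ρ`, and every column of `T` sums to `1`, then there are a unique `Q̂` with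
`Q T = T Q̂` and a unique `ρ̂` with `ρ = T ρ̂`, and these satisfy `êᵀ Q̂ = êᵀ` and `Q̂ ρ̂ = ρ̂`. -/
theorem restricted_matrix_eigen
    (k m : ℕ) (hk : 0 < k)
    (Q : Matrix (Fin k) (Fin k) ℝ)
    (hQ : (1 : Fin k → ℝ) ᵥ* Q = 1)
    (ρ : Fin k → ℝ) (hρ : Q *ᵥ ρ = ρ)
    (T : Matrix (Fin k) (Fin m) ℝ)
    (hrank : T.rank = m)
    (hinv : ∀ v ∈ LinearMap.range T.mulVecLin, Q *ᵥ v ∈ LinearMap.range T.mulVecLin)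
    (hρmem : ρ ∈ LinearMap.range T.mulVecLin)
    (hsum : (1 : Fin k → ℝ) ᵥ* T = 1) :
    (∃! Qhat : Matrix (Fin m) (Fin m) ℝ, Q * T = T * Qhat) ∧
    (∃! ρhat : Fin m → ℝ, ρ = T *ᵥ ρhat) ∧
    (∀ (Qhat : Matrix (Fin m) (Fin m) ℝ) (ρhat : Fin m → ℝ),
      Q * T = T * Qhat → ρ = T *ᵥ ρhat →
      (1 : Fin m → ℝ) ᵥ* Qhat = 1 ∧ Qhat *ᵥ ρhat = ρhat) := by
  have hinj : Function.Injective T.mulVecLin := inj_of_rank T hrank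
  have hinjv : ∀ u v : Fin m → ℝ, T *ᵥ u = T *ᵥ v → u = v := by
    intro u v h
    exact hinj (by simpa using h)
  -- existence of Qhat
  have hcol : ∀ j : Fin m, ∃ c : Fin m → ℝ, T *ᵥ c = Q *ᵥ (fun i => T i j) := by
    intro j
    have hmem : (fun i => T i j) ∈ LinearMap.range T.mulVecLin := by
      refine ⟨Pi.single j 1, ?_⟩
      simp [Matrix.mulVecLin_apply, Matrix.mulVec_single]; rfl
    obtain ⟨c, hc⟩ := hinv _ hmem
    exact ⟨c, by simpa using hc⟩
  choose c hc using hcol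
  set Qhat₀ : Matrix (Fin m) (Fin m) ℝ := Matrix.of (fun i j => c j i) with hQhat₀
  have hQT : Q * T = T * Qhat₀ := by
    ext i j
    have h1 : (Q * T) i j = (Q *ᵥ (fun i => T i j)) i := by
      simp [Matrix.mul_apply, Matrix.mulVec, dotProduct]
    have h2 : (T * Qhat₀) i j = (T *ᵥ c j) i := by
      simp [Matrix.mul_apply, Matrix.mulVec, dotProduct, hQhat₀]
    rw [h1, h2, hc j]
  have huniqQ : ∀ A B : Matrix (Fin m) (Fin m) ℝ, T * A = T * B → A = B := by
    intro A B h
    ext i j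
    have : T *ᵥ (fun l => A l j) = T *ᵥ (fun l => B l j) := by
      ext i'
      have := congrFun (congrFun h i') j
      simpa [Matrix.mul_apply, Matrix.mulVec, dotProduct] using this
    exact congrFun (hinjv _ _ this) i
  obtain ⟨r, hr⟩ := hρmem
  have hr' : T *ᵥ r = ρ := by simpa using hr
  refine ⟨⟨Qhat₀, hQT, fun A hA => huniqQ A Qhat₀ (hA ▸ hQT)⟩,
    ⟨r, hr'.symm, fun s hs => hinjv s r (by rw [← hs, hr'])⟩, ?_⟩
  intro Qhat ρhat hQThat hρhat
  constructor
  · have h1 : (1 : Fin k → ℝ) ᵥ* (Q * T) = (1 : Fin m → ℝ) := by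
      rw [← Matrix.vecMul_vecMul, hQ, hsum]
    rw [hQThat, ← Matrix.vecMul_vecMul, hsum] at h1
    exact h1
  · apply hinjv
    have : T *ᵥ (Qhat *ᵥ ρhat) = (T * Qhat) *ᵥ ρhat := by
      rw [Matrix.mulVec_mulVec]
    rw [this, ← hQThat, ← Matrix.mulVec_mulVec, ← hρhat, hρ, hρhat]
end

section
/- Let T ∈ ℝ^{m×k} have full row rank m, suppose ker T is Q-invariant (Q·ker T ⊆ ker T), and e^T = ê^T T, where ê ∈ ℝ^m is the all-ones vector. Define ρ̂ = Tρ ∈ ℝ^m. Then there exists a unique matrix Q̂ ∈ ℝ^{m×m} with Q̂ T = T Q, and it satisfies ê^T Q̂ = ê^T and Q̂ ρ̂ = ρ̂; that is, Q̂ has an eigenvalue at one with left eigenvector ê and right eigenvector ρ̂. -/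
open Matrix

/-- If `T ∈ ℝ^{m×k}` has full row rank, `ker T` is `Q`-invariant, and
`eᵀ = êᵀ T`, then there is a unique `Q̂` with `Q̂ T = T Q`, and with `ρ̂ = T ρ` it satisfies
`êᵀ Q̂ = êᵀ` and `Q̂ ρ̂ = ρ̂`. -/
theorem quotient_matrix_eigen
    (k m : ℕ) (hk : 0 < k)
    (Q : Matrix (Fin k) (Fin k) ℝ)
    (hQ : (1 : Fin k → ℝ) ᵥ* Q = 1)
    (ρ : Fin k → ℝ) (hρ : Q *ᵥ ρ = ρ)
    (T : Matrix (Fin m) (Fin k) ℝ)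
    (hrank : T.rank = m)
    (hinv : ∀ v : Fin k → ℝ, T *ᵥ v = 0 → T *ᵥ (Q *ᵥ v) = 0)
    (hsum : (1 : Fin m → ℝ) ᵥ* T = (1 : Fin k → ℝ)) :
    (∃! Qhat : Matrix (Fin m) (Fin m) ℝ, Qhat * T = T * Q) ∧
    (∀ Qhat : Matrix (Fin m) (Fin m) ℝ, Qhat * T = T * Q →
      (1 : Fin m → ℝ) ᵥ* Qhat = 1 ∧ Qhat *ᵥ (T *ᵥ ρ) = T *ᵥ ρ) := by
  -- T has a right inverse B
  have hsurj : Function.Surjective T.mulVec := by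
    have hrange : LinearMap.range T.mulVecLin = ⊤ := by
      apply Submodule.eq_top_of_finrank_eq
      rw [← Matrix.rank, hrank, Module.finrank_pi, Fintype.card_fin]
    intro y
    have : y ∈ LinearMap.range T.mulVecLin := by rw [hrange]; trivial
    obtain ⟨x, hx⟩ := this
    exact ⟨x, hx⟩
  obtain ⟨B, hB⟩ := Matrix.mulVec_surjective_iff_exists_right_inverse.mp hsurj
  -- the candidate
  have hT0 : T * (B * T - 1) = 0 := by
    rw [Matrix.mul_sub, Matrix.mul_one, ← Matrix.mul_assoc, hB, Matrix.one_mul, sub_self]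
  have hTQ : (T * Q * B) * T = T * Q := by
    have hcol : T * Q * (B * T - 1) = 0 := by
      apply Matrix.ext
      intro i j
      have h1 : T *ᵥ ((B * T - 1) *ᵥ Pi.single j 1) = 0 := by
        rw [Matrix.mulVec_mulVec, hT0, Matrix.zero_mulVec]
      have h2 := hinv _ h1
      have h3 : (T * Q * (B * T - 1)) *ᵥ Pi.single j 1 = 0 := by
        rw [← Matrix.mulVec_mulVec, ← Matrix.mulVec_mulVec]
        exact h2
      have h4 := congrFun h3 i
      simpa [Matrix.mulVec_single] using h4
    have h5 : T * Q * (B * T) = T * Q := by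
      rw [Matrix.mul_sub, Matrix.mul_one, sub_eq_zero] at hcol
      exact hcol
    rw [Matrix.mul_assoc, h5]
  refine ⟨⟨T * Q * B, hTQ, ?_⟩, ?_⟩
  · intro Y hY
    calc Y = Y * (T * B) := by rw [hB, Matrix.mul_one]
      _ = (Y * T) * B := by rw [Matrix.mul_assoc]
      _ = (T * Q) * B := by rw [hY]
  · intro Qhat hQhat
    constructor
    · have h1 : ((1 : Fin m → ℝ) ᵥ* Qhat) ᵥ* T = (1 : Fin m → ℝ) ᵥ* T := by
        rw [Matrix.vecMul_vecMul, hQhat, ← Matrix.vecMul_vecMul, hsum, hQ, ← hsum]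
      calc (1 : Fin m → ℝ) ᵥ* Qhat
          = ((1 : Fin m → ℝ) ᵥ* Qhat) ᵥ* (T * B) := by rw [hB, Matrix.vecMul_one]
        _ = (((1 : Fin m → ℝ) ᵥ* Qhat) ᵥ* T) ᵥ* B := by simp only [Matrix.vecMul_vecMul, Matrix.mul_assoc]
        _ = ((1 : Fin m → ℝ) ᵥ* T) ᵥ* B := by rw [h1]
        _ = (1 : Fin m → ℝ) ᵥ* (T * B) := by rw [Matrix.vecMul_vecMul]
        _ = 1 := by rw [hB, Matrix.vecMul_one]
    · rw [Matrix.mulVec_mulVec, hQhat, ← Matrix.mulVec_mulVec, hρ]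
end

section
/- Suppose T ∈ ℝ^{k×k̂} has full column rank k̂, its column space equals V_R, there is a map φ̂ : {1,…,k̂} → {1,…,d} with T_{ij} = 0 whenever φ(i) ≠ φ̂(j), and e^T T = ê^T where ê ∈ ℝ^{k̂} is the all-ones vector. Let Q̂ ∈ ℝ^{k̂×k̂} and ρ̂ ∈ ℝ^{k̂} be the unique solutions of Q T = T Q̂ and ρ = T ρ̂ (which exist since V_R is Q-invariant and contains ρ), and let Î_u ∈ ℝ^{k̂×k̂} be the diagonal 0/1 matrix of φ̂. Then for every n ≥ 1, every pair of words w = (w_1,…,w_n), w' = (w'_1,…,w'_n) ∈ {1,…,d}^n and every z ∈ {1,…,d}: Σ_{i : φ(i) = z} [e^T I_{w_n} Q I_{w_{n−1}} Q ⋯ I_{w_1} Q]_i · [ρ^T I_{w'_n} Q^T ⋯ I_{w'_1} Q^T]_i = Σ_{j : φ̂(j) = z} [ê^T Î_{w_n} Q̂ Î_{w_{n−1}} Q̂ ⋯ Î_{w_1} Q̂]_j · [ρ̂^T Î_{w'_n} Q̂^T ⋯ Î_{w'_1} Q̂^T]_j. That is, the third-order tensor A ⊗ B ⊗ C built from (e,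 Q, ρ, φ) equals the tensor Â ⊗ B̂ ⊗ Ĉ built from (ê, Q̂, ρ̂, φ̂). -/
open Matrix

lemma diagInd_comm_aux {k d khat : ℕ} (φ : Fin k → Fin d) (φhat : Fin khat → Fin d)
    (T : Matrix (Fin k) (Fin khat) ℝ)
    (hpattern : ∀ (i : Fin k) (j : Fin khat), φ i ≠ φhat j → T i j = 0) (u : Fin d) :
    diagInd k d φ u * T = T * diagInd khat d φhat u := by
  ext i j
  simp only [diagInd, Matrix.diagonal_mul, Matrix.mul_diagonal]
  by_cases h : φ i = φhat j
  · rw [h]; ring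
  · rw [hpattern i j h]; ring

lemma chain_comm_aux {k d khat : ℕ} (φ : Fin k → Fin d) (φhat : Fin khat → Fin d)
    (Q : Matrix (Fin k) (Fin k) ℝ) (Qhat : Matrix (Fin khat) (Fin khat) ℝ)
    (T : Matrix (Fin k) (Fin khat) ℝ)
    (hpattern : ∀ (i : Fin k) (j : Fin khat), φ i ≠ φhat j → T i j = 0)
    (hQT : Q * T = T * Qhat) (l : List (Fin d)) :
    chain k d Q φ l * T = T * chain khat d Qhat φhat l := by
  induction l with
  | nil => simp [chain]
  | cons u l ih =>
      simp only [chain]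
      calc diagInd k d φ u * Q * chain k d Q φ l * T
          = diagInd k d φ u * Q * (chain k d Q φ l * T) := by simp only [Matrix.mul_assoc]
        _ = diagInd k d φ u * (Q * T) * chain khat d Qhat φhat l := by rw [ih]; simp only [Matrix.mul_assoc]
        _ = (diagInd k d φ u * T) * (Qhat * chain khat d Qhat φhat l) := by rw [hQT]; simp only [Matrix.mul_assoc]
        _ = T * (diagInd khat d φhat u * Qhat * chain khat d Qhat φhat l) := by
              rw [diagInd_comm_aux φ φhat T hpattern u]; simp only [Matrix.mul_assoc]

lemma chainT_comm_aux {k d khat : ℕ} (φ : Fin k → Fin d) (φhat : Fin khat → Fin d)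
    (Q : Matrix (Fin k) (Fin k) ℝ) (Qhat : Matrix (Fin khat) (Fin khat) ℝ)
    (T : Matrix (Fin k) (Fin khat) ℝ)
    (hpattern : ∀ (i : Fin k) (j : Fin khat), φ i ≠ φhat j → T i j = 0)
    (hQT : Q * T = T * Qhat) (l : List (Fin d)) :
    (chain k d Qᵀ φ l)ᵀ * T = T * (chain khat d Qhatᵀ φhat l)ᵀ := by
  induction l with
  | nil => simp [chain]
  | cons u l ih =>
      have hdiagT : ∀ u, (diagInd k d φ u)ᵀ = diagInd k d φ u := by
        intro u; simp [diagInd]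
      have hdiagT' : ∀ u, (diagInd khat d φhat u)ᵀ = diagInd khat d φhat u := by
        intro u; simp [diagInd]
      simp only [chain, Matrix.transpose_mul, Matrix.transpose_transpose, hdiagT, hdiagT']
      calc (chain k d Qᵀ φ l)ᵀ * (Q * diagInd k d φ u) * T
          = (chain k d Qᵀ φ l)ᵀ * Q * (diagInd k d φ u * T) := by simp only [Matrix.mul_assoc]
        _ = (chain k d Qᵀ φ l)ᵀ * (Q * T) * diagInd khat d φhat u := by
              rw [diagInd_comm_aux φ φhat T hpattern u]; simp only [Matrix.mul_assoc]
        _ = ((chain k d Qᵀ φ l)ᵀ * T) * (Qhat * diagInd khat d φhat u) := by rw [hQT]; simp only [Matrix.mul_assoc]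
        _ = T * ((chain khat d Qhatᵀ φhat l)ᵀ * (Qhat * diagInd khat d φhat u)) := by
              rw [ih]; simp only [Matrix.mul_assoc]

lemma sum_filter_dot_aux {m d : ℕ} (φ' : Fin m → Fin d) (z : Fin d) (a b : Fin m → ℝ) :
    ∑ i ∈ Finset.univ.filter (fun i : Fin m => φ' i = z), a i * b i
      = (a ᵥ* diagInd m d φ' z) ⬝ᵥ b := by
  rw [Finset.sum_filter]
  simp only [dotProduct, diagInd, Matrix.vecMul_diagonal]
  refine Finset.sum_congr rfl fun i _ => ?_
  split_ifs <;> ring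

/-- Theorem 5, reduction by the reachable subspace: if `T` is a full-column-rank
matrix whose column space is `V_R`, with the zero pattern of `φ, φ̂` and columns summing to one,
and `Q̂, ρ̂` solve `Q T = T Q̂`, `ρ = T ρ̂`, then the third-order tensors built from
`(e, Q, ρ, φ)` and `(ê, Q̂, ρ̂, φ̂)` coincide. -/
theorem tensor_reduction_reachable
    (k d khat : ℕ) (hk : 0 < k) (hd : 0 < d) (φ : Fin k → Fin d)
    (Q : Matrix (Fin k) (Fin k) ℝ)
    (hQ : (1 : Fin k → ℝ) ᵥ* Q = 1)
    (ρ : Fin k → ℝ) (hρ : Q *ᵥ ρ = ρ)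
    (T : Matrix (Fin k) (Fin khat) ℝ) (φhat : Fin khat → Fin d)
    (hrank : T.rank = khat)
    (hrange : LinearMap.range T.mulVecLin = reachSpace k d Q φ ρ)
    (hpattern : ∀ (i : Fin k) (j : Fin khat), φ i ≠ φhat j → T i j = 0)
    (hsum : (1 : Fin k → ℝ) ᵥ* T = 1)
    (Qhat : Matrix (Fin khat) (Fin khat) ℝ) (ρhat : Fin khat → ℝ)
    (hQT : Q * T = T * Qhat)
    (hρT : ρ = T *ᵥ ρhat) :
    ∀ (w w' : List (Fin d)), w ≠ [] → w' ≠ [] → w.length = w'.length →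
      ∀ z : Fin d,
        ∑ i ∈ Finset.univ.filter (fun i : Fin k => φ i = z),
          ((1 : Fin k → ℝ) ᵥ* chain k d Q φ w) i * (ρ ᵥ* chain k d Qᵀ φ w') i =
        ∑ j ∈ Finset.univ.filter (fun j : Fin khat => φhat j = z),
          ((1 : Fin khat → ℝ) ᵥ* chain khat d Qhat φhat w) j *
            (ρhat ᵥ* chain khat d Qhatᵀ φhat w') j := by
  intro w w' _ _ _ z
  rw [sum_filter_dot_aux, sum_filter_dot_aux]
  have hb : ρ ᵥ* chain k d Qᵀ φ w' = (chain k d Qᵀ φ w')ᵀ *ᵥ ρ := by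
    rw [Matrix.mulVec_transpose]
  have hb' : ρhat ᵥ* chain khat d Qhatᵀ φhat w'
      = (chain khat d Qhatᵀ φhat w')ᵀ *ᵥ ρhat := by
    rw [Matrix.mulVec_transpose]
  rw [hb, hb', Matrix.vecMul_vecMul, Matrix.vecMul_vecMul,
    Matrix.dotProduct_mulVec, Matrix.dotProduct_mulVec,
    Matrix.vecMul_vecMul, Matrix.vecMul_vecMul, hρT, Matrix.dotProduct_mulVec,
    Matrix.vecMul_vecMul]
  have key : chain k d Q φ w * diagInd k d φ z * (chain k d Qᵀ φ w')ᵀ * T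
      = T * (chain khat d Qhat φhat w * diagInd khat d φhat z
          * (chain khat d Qhatᵀ φhat w')ᵀ) := by
    calc chain k d Q φ w * diagInd k d φ z * (chain k d Qᵀ φ w')ᵀ * T
        = chain k d Q φ w * diagInd k d φ z * ((chain k d Qᵀ φ w')ᵀ * T) := by simp only [Matrix.mul_assoc]
      _ = chain k d Q φ w * (diagInd k d φ z * T) * (chain khat d Qhatᵀ φhat w')ᵀ := by
            rw [chainT_comm_aux φ φhat Q Qhat T hpattern hQT]; simp only [Matrix.mul_assoc]
      _ = (chain k d Q φ w * T) * (diagInd khat d φhat z * (chain khat d Qhatᵀ φhat w')ᵀ) := by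
            rw [diagInd_comm_aux φ φhat T hpattern]; simp only [Matrix.mul_assoc]
      _ = T * (chain khat d Qhat φhat w * diagInd khat d φhat z
            * (chain khat d Qhatᵀ φhat w')ᵀ) := by
            rw [chain_comm_aux φ φhat Q Qhat T hpattern hQT]; simp only [Matrix.mul_assoc]
  rw [key, ← Matrix.vecMul_vecMul, hsum]
end

section
/- Suppose T ∈ ℝ^{k̂×k} has full row rank k̂, ker T = V_N, there is a map φ̂ : {1,…,k̂} → {1,…,d} with T_{ij} = 0 whenever φ̂(i) ≠ φ(j), and e^T = ê^T T where ê ∈ ℝ^{k̂} is the all-ones vector. Let Q̂ ∈ ℝ^{k̂×k̂} be the unique solution of Q̂ T = T Q (which exists since V_N is Q-invariant), let ρ̂ = T ρ, and let Î_u ∈ ℝ^{k̂×k̂} be the diagonal 0/1 matrix of φ̂. Then for every n ≥ 1, every pair of words w = (w_1,…,w_n), w' = (w'_1,…,w'_n) ∈ {1,…,d}^n and every z ∈ {1,…,d}: Σ_{i : φ(i) = z} [e^T I_{w_n} Q I_{w_{n−1}} Q ⋯ I_{w_1} Q]_i · [ρ^T I_{w'_n} Q^T ⋯ I_{w'_1}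 Q^T]_i = Σ_{j : φ̂(j) = z} [ê^T Î_{w_n} Q̂ Î_{w_{n−1}} Q̂ ⋯ Î_{w_1} Q̂]_j · [ρ̂^T Î_{w'_n} Q̂^T ⋯ Î_{w'_1} Q̂^T]_j. That is, the third-order tensor A ⊗ B ⊗ C built from (e, Q, ρ, φ) equals the tensor Â ⊗ B̂ ⊗ Ĉ built from (ê, Q̂, ρ̂, φ̂). -/
open Matrix

/-- Theorem 6, reduction by the null space: if `T` is a full-row-rank matrix
with `ker T = V_N`, the zero pattern of `φ̂, φ`, and `eᵀ = êᵀ T`, and `Q̂` solves `Q̂ T = T Q`,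
`ρ̂ = T ρ`, then the third-order tensors built from `(e, Q, ρ, φ)` and `(ê, Q̂, ρ̂, φ̂)`
coincide. -/
theorem tensor_reduction_null
    (k d khat : ℕ) (hk : 0 < k) (hd : 0 < d) (φ : Fin k → Fin d)
    (Q : Matrix (Fin k) (Fin k) ℝ)
    (hQ : (1 : Fin k → ℝ) ᵥ* Q = 1)
    (ρ : Fin k → ℝ) (hρ : Q *ᵥ ρ = ρ)
    (T : Matrix (Fin khat) (Fin k) ℝ) (φhat : Fin khat → Fin d)
    (hrank : T.rank = khat)
    (hker : LinearMap.ker T.mulVecLin = nullSpace k d Q φ)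
    (hpattern : ∀ (i : Fin khat) (j : Fin k), φhat i ≠ φ j → T i j = 0)
    (hsum : (1 : Fin khat → ℝ) ᵥ* T = (1 : Fin k → ℝ))
    (Qhat : Matrix (Fin khat) (Fin khat) ℝ) (ρhat : Fin khat → ℝ)
    (hQT : Qhat * T = T * Q)
    (hρT : ρhat = T *ᵥ ρ) :
    ∀ (w w' : List (Fin d)), w ≠ [] → w' ≠ [] → w.length = w'.length →
      ∀ z : Fin d,
        ∑ i ∈ Finset.univ.filter (fun i : Fin k => φ i = z),
          ((1 : Fin k → ℝ) ᵥ* chain k d Q φ w) i * (ρ ᵥ* chain k d Qᵀ φ w') i =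
        ∑ j ∈ Finset.univ.filter (fun j : Fin khat => φhat j = z),
          ((1 : Fin khat → ℝ) ᵥ* chain khat d Qhat φhat w) j *
            (ρhat ᵥ* chain khat d Qhatᵀ φhat w') j := by
  have hIT : ∀ u : Fin d, diagInd khat d φhat u * T = T * diagInd k d φ u := by
    intro u
    ext i j
    simp only [diagInd, Matrix.diagonal_mul, Matrix.mul_diagonal]
    by_cases h : φhat i = φ j
    · rw [h, mul_comm]
    · rw [hpattern i j h, mul_zero, zero_mul]
  have hCT : ∀ l, chain khat d Qhat φhat l * T = T * chain k d Q φ l := by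
    intro l
    induction l with
    | nil => simp [chain]
    | cons u l ih =>
        calc diagInd khat d φhat u * Qhat * chain khat d Qhat φhat l * T
            = diagInd khat d φhat u * Qhat * (chain khat d Qhat φhat l * T) := by
              rw [Matrix.mul_assoc]
          _ = diagInd khat d φhat u * (Qhat * T) * chain k d Q φ l := by
              rw [ih]; simp only [Matrix.mul_assoc]
          _ = diagInd khat d φhat u * T * (Q * chain k d Q φ l) := by
              rw [hQT]; simp only [Matrix.mul_assoc]
          _ = T * (diagInd k d φ u * Q * chain k d Q φ l) := by
              rw [hIT]; simp only [Matrix.mul_assoc]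
  have hDT : ∀ (m : ℕ) (ψ : Fin m → Fin d) (u : Fin d), (diagInd m d ψ u)ᵀ = diagInd m d ψ u := by
    intro m ψ u; simp [diagInd]
  have hCTt : ∀ l, (chain khat d Qhatᵀ φhat l)ᵀ * T = T * (chain k d Qᵀ φ l)ᵀ := by
    intro l
    induction l with
    | nil => simp [chain]
    | cons u l ih =>
        simp only [chain, Matrix.transpose_mul, Matrix.transpose_transpose, hDT]
        calc (chain khat d Qhatᵀ φhat l)ᵀ * (Qhat * diagInd khat d φhat u) * T
            = (chain khat d Qhatᵀ φhat l)ᵀ * Qhat * (diagInd khat d φhat u * T) := by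
              simp only [Matrix.mul_assoc]
          _ = (chain khat d Qhatᵀ φhat l)ᵀ * (Qhat * T) * diagInd k d φ u := by
              rw [hIT]; simp only [Matrix.mul_assoc]
          _ = ((chain khat d Qhatᵀ φhat l)ᵀ * T) * (Q * diagInd k d φ u) := by
              rw [hQT]; simp only [Matrix.mul_assoc]
          _ = T * ((chain k d Qᵀ φ l)ᵀ * (Q * diagInd k d φ u)) := by
              rw [ih]; simp only [Matrix.mul_assoc]
  intro w w' _ _ _ z
  have filt : ∀ (m : ℕ) (ψ : Fin m → Fin d) (a b : Fin m → ℝ),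
      ∑ i ∈ Finset.univ.filter (fun i => ψ i = z), a i * b i
        = (a ᵥ* diagInd m d ψ z) ⬝ᵥ b := by
    intro m ψ a b
    rw [Finset.sum_filter]
    simp only [diagInd, dotProduct, Matrix.vecMul_diagonal]
    refine Finset.sum_congr rfl fun i _ => ?_
    by_cases h : ψ i = z <;> simp [h]
  rw [filt, filt]
  have expand : ∀ {m : ℕ} (ψ : Fin m → Fin d) (Qm : Matrix (Fin m) (Fin m) ℝ)
      (r : Fin m → ℝ),
      ((1 : Fin m → ℝ) ᵥ* chain m d Qm ψ w ᵥ* diagInd m d ψ z) ⬝ᵥ (r ᵥ* chain m d Qmᵀ ψ w')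
        = ((1 : Fin m → ℝ) ᵥ* (chain m d Qm ψ w * diagInd m d ψ z * (chain m d Qmᵀ ψ w')ᵀ)) ⬝ᵥ r := by
    intro m ψ Qm r
    rw [show r ᵥ* chain m d Qmᵀ ψ w' = (chain m d Qmᵀ ψ w')ᵀ *ᵥ r from
        (Matrix.mulVec_transpose _ _).symm,
      Matrix.dotProduct_mulVec, Matrix.vecMul_vecMul, Matrix.vecMul_vecMul,
      Matrix.mul_assoc]
  rw [expand, expand, hρT, Matrix.dotProduct_mulVec, Matrix.vecMul_vecMul]
  congr 1
  symm
  calc (1 : Fin khat → ℝ) ᵥ* (chain khat d Qhat φhat w * diagInd khat d φhat z *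
          (chain khat d Qhatᵀ φhat w')ᵀ * T)
      = (1 : Fin khat → ℝ) ᵥ* (chain khat d Qhat φhat w * diagInd khat d φhat z *
          ((chain khat d Qhatᵀ φhat w')ᵀ * T)) := by rw [Matrix.mul_assoc]
    _ = (1 : Fin khat → ℝ) ᵥ* (chain khat d Qhat φhat w * (diagInd khat d φhat z * T) *
          (chain k d Qᵀ φ w')ᵀ) := by
        rw [hCTt]; simp only [Matrix.mul_assoc]
    _ = (1 : Fin khat → ℝ) ᵥ* ((chain khat d Qhat φhat w * T) *
          (diagInd k d φ z * (chain k d Qᵀ φ w')ᵀ)) := by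
        rw [hIT]; simp only [Matrix.mul_assoc]
    _ = (1 : Fin khat → ℝ) ᵥ* T ᵥ* (chain k d Q φ w * diagInd k d φ z * (chain k d Qᵀ φ w')ᵀ) := by
        rw [hCT]; simp only [Matrix.vecMul_vecMul, Matrix.mul_assoc]
    _ = (1 : Fin k → ℝ) ᵥ* (chain k d Q φ w * diagInd k d φ z * (chain k d Qᵀ φ w')ᵀ) := by
        rw [hsum]
end

section
/- Assume the hypotheses of the reachable-subspace reduction: T_R ∈ ℝ^{k×k̂_R} has full column rank with column space V_R, T_{R,ij} = 0 whenever φ(i) ≠ φ̂_R(j) for a map φ̂_R : {1,…,k̂_R} → {1,…,d}, and e^T T_R = ê_R^T where ê_R ∈ ℝ^{k̂_R} is all-ones; Q̂_R ∈ ℝ^{k̂_R×k̂_R} and ρ̂_R ∈ ℝ^{k̂_R} are the unique solutions of Q T_R = T_R Q̂_R and ρ = T_R ρ̂_R. Further, let T ∈ ℝ^{k̂×k̂_R} have full row rank, with a map φ̂ : {1,…,k̂} → {1,…,d} such that T_{ij} = 0 whenever φ̂(i) ≠ φ̂_R(j), ê_R^T = ê^T T where ê ∈ ℝ^{k̂}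 is all-ones, and ker T is Q̂_R-invariant (Q̂_R · ker T ⊆ ker T). Let Q̂ ∈ ℝ^{k̂×k̂} be the unique solution of Q̂ T = T Q̂_R, let ρ̂ = T ρ̂_R, and let Î_u ∈ ℝ^{k̂×k̂} be the diagonal 0/1 matrix of φ̂. Then for every n ≥ 1, every pair of words w = (w_1,…,w_n), w' = (w'_1,…,w'_n) ∈ {1,…,d}^n and every z ∈ {1,…,d}: Σ_{i : φ(i) = z} [e^T I_{w_n} Q ⋯ I_{w_1} Q]_i · [ρ^T I_{w'_n} Q^T ⋯ I_{w'_1} Q^T]_i = Σ_{j : φ̂(j) = z} [ê^T Î_{w_n} Q̂ ⋯ Î_{w_1} Q̂]_j · [ρ̂^T Î_{w'_n} Q̂^T ⋯ Î_{w'_1} Q̂^T]_j. That is, the third-order tensor A ⊗ B ⊗ C built from (e, Q, ρ, φ) equals the tensor Â ⊗ B̂ ⊗ Ĉ built from (ê, Q̂, ρ̂, φ̂), whose number of rank-one terms is k̂. -/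
open Matrix

lemma diagInd_comm {k1 k2 d : ℕ} (φ1 : Fin k1 → Fin d) (φ2 : Fin k2 → Fin d)
    (S : Matrix (Fin k1) (Fin k2) ℝ)
    (hp : ∀ i j, φ1 i ≠ φ2 j → S i j = 0) (u : Fin d) :
    diagInd k1 d φ1 u * S = S * diagInd k2 d φ2 u := by
  ext i j
  simp only [diagInd, Matrix.diagonal_mul, Matrix.mul_diagonal]
  by_cases h : φ1 i = φ2 j
  · rw [h]; ring
  · rw [hp i j h]; ring

lemma chain_intertwine {k1 k2 d : ℕ} (A : Matrix (Fin k1) (Fin k1) ℝ)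
    (B : Matrix (Fin k2) (Fin k2) ℝ) (S : Matrix (Fin k1) (Fin k2) ℝ)
    (φ1 : Fin k1 → Fin d) (φ2 : Fin k2 → Fin d)
    (hAS : A * S = S * B)
    (hp : ∀ i j, φ1 i ≠ φ2 j → S i j = 0) :
    ∀ l : List (Fin d), chain k1 d A φ1 l * S = S * chain k2 d B φ2 l
  | [] => by simp [chain]
  | u :: l => by
    rw [chain, chain, Matrix.mul_assoc (diagInd k1 d φ1 u * A),
      chain_intertwine A B S φ1 φ2 hAS hp l, Matrix.mul_assoc, ← Matrix.mul_assoc A,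
      hAS, Matrix.mul_assoc, ← Matrix.mul_assoc (diagInd k1 d φ1 u),
      diagInd_comm φ1 φ2 S hp u]
    simp only [Matrix.mul_assoc]

/-- Theorem 7, reduction by the effective space: under the reachable-subspace
reduction hypotheses, together with a structured full-row-rank `T` whose kernel is
`Q̂_R`-invariant, and `Q̂, ρ̂` defined by `Q̂ T = T Q̂_R`, `ρ̂ = T ρ̂_R`, the third-order tensor
built from `(e, Q, ρ, φ)` equals the one built from `(ê, Q̂, ρ̂, φ̂)`. -/
theorem tensor_reduction_effective
    (k d kR khat : ℕ) (hk : 0 < k) (hd : 0 < d) (φ : Fin k → Fin d)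
    (Q : Matrix (Fin k) (Fin k) ℝ)
    (hQ : (1 : Fin k → ℝ) ᵥ* Q = 1)
    (ρ : Fin k → ℝ) (hρ : Q *ᵥ ρ = ρ)
    (TR : Matrix (Fin k) (Fin kR) ℝ) (φR : Fin kR → Fin d)
    (hRrank : TR.rank = kR)
    (hRrange : LinearMap.range TR.mulVecLin = reachSpace k d Q φ ρ)
    (hRpattern : ∀ (i : Fin k) (j : Fin kR), φ i ≠ φR j → TR i j = 0)
    (hRsum : (1 : Fin k → ℝ) ᵥ* TR = 1)
    (QR : Matrix (Fin kR) (Fin kR) ℝ) (ρR : Fin kR → ℝ)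
    (hQR : Q * TR = TR * QR)
    (hρR : ρ = TR *ᵥ ρR)
    (T : Matrix (Fin khat) (Fin kR) ℝ) (φhat : Fin khat → Fin d)
    (hTrank : T.rank = khat)
    (hTpattern : ∀ (i : Fin khat) (j : Fin kR), φhat i ≠ φR j → T i j = 0)
    (hTsum : (1 : Fin khat → ℝ) ᵥ* T = (1 : Fin kR → ℝ))
    (hTinv : ∀ v : Fin kR → ℝ, T *ᵥ v = 0 → T *ᵥ (QR *ᵥ v) = 0)
    (Qhat : Matrix (Fin khat) (Fin khat) ℝ) (ρhat : Fin khat → ℝ)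
    (hQhat : Qhat * T = T * QR)
    (hρhat : ρhat = T *ᵥ ρR) :
    ∀ (w w' : List (Fin d)), w ≠ [] → w' ≠ [] → w.length = w'.length →
      ∀ z : Fin d,
        ∑ i ∈ Finset.univ.filter (fun i : Fin k => φ i = z),
          ((1 : Fin k → ℝ) ᵥ* chain k d Q φ w) i * (ρ ᵥ* chain k d Qᵀ φ w') i =
        ∑ j ∈ Finset.univ.filter (fun j : Fin khat => φhat j = z),
          ((1 : Fin khat → ℝ) ᵥ* chain khat d Qhat φhat w) j *
            (ρhat ᵥ* chain khat d Qhatᵀ φhat w') j := by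

  intro w w' _ _ _ z
  have sum_eq : ∀ {m : ℕ} (A : Matrix (Fin m) (Fin m) ℝ) (ψ : Fin m → Fin d)
      (r : Fin m → ℝ),
      ∑ i ∈ Finset.univ.filter (fun i : Fin m => ψ i = z),
        ((1 : Fin m → ℝ) ᵥ* chain m d A ψ w) i * (r ᵥ* chain m d Aᵀ ψ w') i
      = (1 : Fin m → ℝ) ⬝ᵥ ((chain m d A ψ w * diagInd m d ψ z *
          (chain m d Aᵀ ψ w')ᵀ) *ᵥ r) := by
    intro m A ψ r
    have hb : r ᵥ* chain m d Aᵀ ψ w' = (chain m d Aᵀ ψ w')ᵀ *ᵥ r := by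
      rw [Matrix.mulVec_transpose]
    have : ((1 : Fin m → ℝ) ᵥ* chain m d A ψ w) ᵥ* diagInd m d ψ z ⬝ᵥ
        ((chain m d Aᵀ ψ w')ᵀ *ᵥ r)
        = (1 : Fin m → ℝ) ⬝ᵥ ((chain m d A ψ w * diagInd m d ψ z *
          (chain m d Aᵀ ψ w')ᵀ) *ᵥ r) := by
      rw [Matrix.vecMul_vecMul, ← Matrix.dotProduct_mulVec, Matrix.mulVec_mulVec]
    rw [← this, ← hb]
    rw [Finset.sum_filter, dotProduct]
    refine Finset.sum_congr rfl fun i _ => ?_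
    simp only [diagInd, Matrix.vecMul_diagonal]
    split_ifs <;> ring
  have red : ∀ {m : ℕ} (A : Matrix (Fin m) (Fin m) ℝ) (ψ : Fin m → Fin d)
      (S : Matrix (Fin m) (Fin kR) ℝ),
      A * S = S * QR → (∀ i j, ψ i ≠ φR j → S i j = 0) →
      (1 : Fin m → ℝ) ᵥ* S = 1 →
      (1 : Fin m → ℝ) ⬝ᵥ ((chain m d A ψ w * diagInd m d ψ z *
          (chain m d Aᵀ ψ w')ᵀ) *ᵥ (S *ᵥ ρR))
      = (1 : Fin kR → ℝ) ⬝ᵥ ((chain kR d QR φR w * diagInd kR d φR z *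
          (chain kR d QRᵀ φR w')ᵀ) *ᵥ ρR) := by
    intro m A ψ S hAS hp hs
    have h1 := chain_intertwine A QR S ψ φR hAS hp w
    have h2 := chain_intertwine QRᵀ Aᵀ Sᵀ φR ψ
      (by rw [← Matrix.transpose_mul, ← Matrix.transpose_mul, hAS])
      (fun i j h => hp j i (Ne.symm h)) w'
    have h2' : (chain m d Aᵀ ψ w')ᵀ * S = S * (chain kR d QRᵀ φR w')ᵀ := by
      have := congrArg Matrix.transpose h2
      simp only [Matrix.transpose_mul, Matrix.transpose_transpose] at this
      exact this.symm
    have hD := diagInd_comm ψ φR S hp z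
    have hM : chain m d A ψ w * diagInd m d ψ z * (chain m d Aᵀ ψ w')ᵀ * S
        = S * (chain kR d QR φR w * diagInd kR d φR z * (chain kR d QRᵀ φR w')ᵀ) := by
      rw [Matrix.mul_assoc (chain m d A ψ w * diagInd m d ψ z), h2',
        ← Matrix.mul_assoc, Matrix.mul_assoc (chain m d A ψ w), hD,
        ← Matrix.mul_assoc, h1]
      simp only [Matrix.mul_assoc]
    rw [Matrix.mulVec_mulVec, hM, ← Matrix.mulVec_mulVec,
      Matrix.dotProduct_mulVec, hs]
  rw [sum_eq Q φ ρ, sum_eq Qhat φhat ρhat, hρR, hρhat,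
    red Q φ TR hQR hRpattern hRsum, red Qhat φhat T hQhat hTpattern hTsum]
end

section
/- For a 'past' word p = (p_0,…,p_i) ∈ {1,…,d}^{i+1} (i ≥ 0) define θ(p) = I_{p_0} Q I_{p_1} Q ⋯ Q I_{p_i} ρ ∈ ℝ^k, and for a 'future' word f = (f_1,…,f_j) ∈ {1,…,d}^j (j ≥ 0) define the row vector γ(f)^T = e^T I_{f_j} Q I_{f_{j−1}} Q ⋯ I_{f_1} Q ∈ ℝ^{1×k} (with γ(f)^T = e^T when j = 0). Then for any finite lists of past words p^{(1)},…,p^{(M)} and future words f^{(1)},…,f^{(N)}, the M×N matrix H with entries H_{ab} = γ(f^{(b)})^T θ(p^{(a)}) has rank at most dim V_R − dim(V_R ∩ V_N). In particular, every finite submatrix of the generalized Hankel matrix of the realization has rank at most the dimension of the effective space (V_R + V_N)/V_N. -/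
open Matrix

set_option synthInstance.maxHeartbeats 1000000 in
/-- every finite submatrix of the generalized Hankel matrix, with entries
`γ(f⁽ᵇ⁾)ᵀ θ(p⁽ᵃ⁾)` where `θ(p) = I_{p₀} Q ⋯ Q I_{pᵢ} ρ` ranges over past words and
`γ(f)ᵀ = eᵀ I_{f_j} Q ⋯ I_{f₁} Q` over future words, has rank at most
`dim V_R − dim (V_R ∩ V_N)`, the dimension of the effective space. -/
theorem hankel_rank_le_effective_dim
    (k d : ℕ) (hk : 0 < k) (hd : 0 < d) (φ : Fin k → Fin d)
    (Q : Matrix (Fin k) (Fin k) ℝ)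
    (hQ : (1 : Fin k → ℝ) ᵥ* Q = 1)
    (ρ : Fin k → ℝ) (hρ : Q *ᵥ ρ = ρ) :
    ∀ (M N : ℕ) (pl : Fin M → List (Fin d)) (pu : Fin M → Fin d)
      (f : Fin N → List (Fin d)),
      (Matrix.of fun (a : Fin M) (b : Fin N) =>
          ((1 : Fin k → ℝ) ᵥ* chain k d Q φ (f b)) ⬝ᵥ
            ((chain k d Q φ (pl a) * diagInd k d φ (pu a)) *ᵥ ρ)).rank ≤
        Module.finrank ℝ (reachSpace k d Q φ ρ) -
          Module.finrank ℝ ↥(reachSpace k d Q φ ρ ⊓ nullSpace k d Q φ) := by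
  intro M N pl pu f
  classical
  set VR := reachSpace k d Q φ ρ with hVR
  set VN := nullSpace k d Q φ with hVN
  set C : Matrix (Fin N) (Fin k) ℝ :=
    Matrix.of fun b => (1 : Fin k → ℝ) ᵥ* chain k d Q φ (f b) with hC
  set L : (Fin k → ℝ) →ₗ[ℝ] (Fin N → ℝ) := C.mulVecLin with hL
  set θ : Fin M → (Fin k → ℝ) :=
    fun a => (chain k d Q φ (pl a) * diagInd k d φ (pu a)) *ᵥ ρ with hθdef
  have hθ : ∀ a, θ a ∈ VR := fun a => Submodule.subset_span ⟨pl a, pu a, rfl⟩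
  set H : Matrix (Fin M) (Fin N) ℝ :=
    Matrix.of fun (a : Fin M) (b : Fin N) =>
      ((1 : Fin k → ℝ) ᵥ* chain k d Q φ (f b)) ⬝ᵥ
        ((chain k d Q φ (pl a) * diagInd k d φ (pu a)) *ᵥ ρ) with hH
  have hsum : ∑ u : Fin d, diagInd k d φ u = 1 := by
    ext i j
    simp only [Matrix.sum_apply, diagInd, Matrix.diagonal_apply, Matrix.one_apply]
    by_cases h : i = j
    · subst h; simp [Finset.sum_ite_eq]
    · simp [h]
  have hLnull : ∀ v ∈ VN, L v = 0 := by
    intro v hv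
    funext b
    have hv' : ∀ (l : List (Fin d)) (u0 : Fin d),
        (1 : Fin k → ℝ) ⬝ᵥ ((chain k d Q φ l * diagInd k d φ u0) *ᵥ v) = 0 := hv
    have key : chain k d Q φ (f b) =
        ∑ u : Fin d, chain k d Q φ (f b) * diagInd k d φ u := by
      rw [← Finset.mul_sum, hsum, mul_one]
    have : L v b = (1 : Fin k → ℝ) ⬝ᵥ (chain k d Q φ (f b) *ᵥ v) := by
      simp [hL, hC, Matrix.mulVecLin_apply, Matrix.mulVec, Matrix.dotProduct_mulVec]
    have hsmv : (∑ u : Fin d, chain k d Q φ (f b) * diagInd k d φ u) *ᵥ v =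
        ∑ u : Fin d, (chain k d Q φ (f b) * diagInd k d φ u) *ᵥ v := by
      ext i
      simp only [Matrix.mulVec, dotProduct, Matrix.sum_apply, Finset.sum_apply,
        Finset.sum_mul]
      rw [Finset.sum_comm]
    have hds : (1 : Fin k → ℝ) ⬝ᵥ (∑ u : Fin d, (chain k d Q φ (f b) * diagInd k d φ u) *ᵥ v)
        = ∑ u : Fin d, (1 : Fin k → ℝ) ⬝ᵥ ((chain k d Q φ (f b) * diagInd k d φ u) *ᵥ v) := by
      simp only [dotProduct, Finset.sum_apply, Finset.mul_sum]
      exact Finset.sum_comm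
    rw [Pi.zero_apply, this, key, hsmv, hds]
    simp [hv']
  -- rows of H are L applied to θ
  have hrow : ∀ a, H a = L (θ a) := by
    intro a
    funext b
    simp [hH, hL, hC, hθdef, Matrix.mulVecLin_apply, Matrix.mulVec, dotProduct]
  have hspan : Submodule.span ℝ (Set.range H) ≤ Submodule.map L VR := by
    rw [Submodule.span_le]
    rintro _ ⟨a, rfl⟩
    exact ⟨θ a, hθ a, (hrow a).symm⟩
  have h1 : H.rank ≤ Module.finrank ℝ (Submodule.map L VR) := by
    rw [Matrix.rank_eq_finrank_span_row]
    exact Submodule.finrank_mono hspan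
  -- rank-nullity on L restricted to VR
  set L' : VR →ₗ[ℝ] (Fin N → ℝ) := L.domRestrict VR with hL'
  have hker : (VR ⊓ VN).comap VR.subtype ≤ LinearMap.ker L' := by
    rintro ⟨x, hx⟩ hmem
    have hxVN : x ∈ VN := (Submodule.mem_comap.mp hmem).2
    simpa [hL', LinearMap.mem_ker] using hLnull x hxVN
  have hkerrank : Module.finrank ℝ ↥(VR ⊓ VN) ≤
      Module.finrank ℝ (LinearMap.ker L') := by
    have heq : Module.finrank ℝ ↥((VR ⊓ VN).comap VR.subtype) =
        Module.finrank ℝ ↥(VR ⊓ VN) :=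
      (Submodule.comapSubtypeEquivOfLe (inf_le_left : VR ⊓ VN ≤ VR)).finrank_eq
    rw [← heq]
    exact Submodule.finrank_mono hker
  have hrn : Module.finrank ℝ (LinearMap.range L') +
      Module.finrank ℝ (LinearMap.ker L') = Module.finrank ℝ VR :=
    LinearMap.finrank_range_add_finrank_ker L'
  have hrange : LinearMap.range L' = Submodule.map L VR :=
    LinearMap.range_domRestrict VR L
  have h2 : Module.finrank ℝ (Submodule.map L VR) ≤
      Module.finrank ℝ VR - Module.finrank ℝ ↥(VR ⊓ VN) := by
    rw [← hrange]
    omega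
  exact le_trans h1 h2
end
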